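/- For a finite potent endomorphism φ of a k-vector space V, the value of the ordinary trace of φ restricted to W is independent of the choice of finite-dimensional φ-invariant subspace W with φⁿV ⊆ W for some n; hence Tate's trace is well-defined. -/

import Mathlib

/-- An endomorphism is finite potent if some power has finite-dimensional range. -/
def IsFinitePotent {k V : Type*} [Field k] [AddCommGroup V] [Module k V]
    (φ : V →ₗ[k] V) : Prop :=
  ∃ n : ℕ, FiniteDimensional k (LinearMap.range (φ ^ n))

/-- `c` is a value of Tate's trace of `φ`: the ordinary trace of the restriction of `φ` to
any finite-dimensional `φ`-invariant subspace `W` with `φⁿ V ⊆ W` for some `n` equals `c`. -/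
def TateTraceSpec {k V : Type*} [Field k] [AddCommGroup V] [Module k V]
    (φ : V →ₗ[k] V) (c : k) : Prop :=
  ∀ (W : Submodule k V) (hW : ∀ x ∈ W, φ x ∈ W), FiniteDimensional k W →
    (∃ n : ℕ, LinearMap.range (φ ^ n) ≤ W) →
    LinearMap.trace k W (φ.restrict hW) = c

open Classical in
/-- Tate's trace of a finite potent endomorphism. -/
noncomputable def tateTrace {k V : Type*} [Field k] [AddCommGroup V] [Module k V]
    (φ : V →ₗ[k] V) : k :=
  if h : ∃ c, TateTraceSpec φ c then h.choose else 0

open LinearMap Submodule in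
lemma trace_restrict_eq_of_le_aux
    {k V : Type*} [Field k] [AddCommGroup V] [Module k V]
    (φ : V →ₗ[k] V) (W' W : Submodule k V) (hle : W' ≤ W)
    (h : ∀ x ∈ W, φ x ∈ W) (h' : ∀ x ∈ W', φ x ∈ W')
    (hfd : FiniteDimensional k W)
    (m : ℕ) (hm : LinearMap.range (φ ^ m) ≤ W') :
    LinearMap.trace k W (φ.restrict h) = LinearMap.trace k W' (φ.restrict h') := by
  set f : W →ₗ[k] W := φ.restrict h with hf
  set p : Submodule k W := W'.comap W.subtype with hpdef
  have hp : ∀ x ∈ p, f x ∈ p := by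
    intro x hx
    exact h' x.1 hx
  obtain ⟨q, hc⟩ := Submodule.exists_isCompl p
  set πp : W →ₗ[k] p := p.linearProjOfIsCompl q hc with hπp
  set πq : W →ₗ[k] q := q.linearProjOfIsCompl p hc.symm with hπq
  set A : p →ₗ[k] p := πp ∘ₗ f ∘ₗ p.subtype with hA
  set D : q →ₗ[k] q := πq ∘ₗ f ∘ₗ q.subtype with hD
  -- decomposition of f
  have hdec : f = (p.subtype ∘ₗ (πp ∘ₗ f)) + (q.subtype ∘ₗ (πq ∘ₗ f)) := by
    ext x
    exact (congrArg Subtype.val (Submodule.projection_add_projection_eq_self hc (f x))).symm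
  -- trace additivity
  have htr : LinearMap.trace k W f = LinearMap.trace k p A + LinearMap.trace k q D := by
    rw [hdec, map_add]
    rw [LinearMap.trace_comp_comm' (πp ∘ₗ f) p.subtype,
        LinearMap.trace_comp_comm' (πq ∘ₗ f) q.subtype]
    simp [hA, hD, LinearMap.comp_assoc]
  -- A is the restriction of f to p
  have hAeq : A = f.restrict hp := by
    ext x
    have : f ((p.subtype : p →ₗ[k] W) x) ∈ p := hp x x.2
    simp only [hA, LinearMap.comp_apply, LinearMap.restrict_apply]
    exact congrArg _ (by
      apply Subtype.ext
      have := Submodule.linearProjOfIsCompl_apply_left hc ⟨f x, this⟩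
      have h2 := congrArg (fun y : p => ((y : W) : V)) this
      exact h2)
  -- πq kills p and hence πq ∘ f ∘ (anything landing in coset)
  have hπq_p : ∀ y : W, y ∈ p → πq y = 0 := fun y hy =>
    Submodule.projectionOnto_apply_of_mem_right hc.symm hy
  -- D is nilpotent
  have hDpow : ∀ (j : ℕ) (x : q), (D ^ j) x = πq ((f ^ j) x) := by
    intro j
    induction j with
    | zero =>
      intro x
      simp only [pow_zero, Module.End.one_apply]
      exact (Submodule.projectionOnto_apply_left hc.symm x).symm
    | succ j ih =>
      intro x
      have key : ∀ z : W, πq (f z) = D (πq z) := by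
        intro z
        have hz : (πp z : W) + (πq z : W) = z :=
          Submodule.projection_add_projection_eq_self hc z
        have : f z = f (πp z : W) + f (πq z : W) := by rw [← map_add]; rw [hz]
        rw [this, map_add, hπq_p _ (hp _ (πp z).2), zero_add]
        simp [hD]
      rw [pow_succ' D j, Module.End.mul_apply, ih x, ← key ((f ^ j) x), pow_succ' f j,
        Module.End.mul_apply]
  have hfm : ∀ x : W, (f ^ m) x ∈ p := by
    intro x
    have : ((f ^ m) x : V) = (φ ^ m) x.1 := by
      rw [hf, Module.End.pow_restrict m h]
      simp [LinearMap.restrict_apply]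
    show ((f ^ m) x : V) ∈ W'
    rw [this]
    exact hm ⟨x.1, rfl⟩
  have hDnil : IsNilpotent D := by
    refine ⟨m, ?_⟩
    ext x
    rw [hDpow m x]
    simpa using hπq_p _ (hfm x)
  have hDtrace : LinearMap.trace k q D = 0 :=
    (LinearMap.isNilpotent_trace_of_isNilpotent hDnil).eq_zero
  -- identify trace on p with trace on W'
  have hconj : φ.restrict h' =
      (Submodule.comapSubtypeEquivOfLe hle).conj (f.restrict hp) := by
    ext x
    rfl
  rw [htr, hAeq, hDtrace, add_zero, hconj, LinearMap.trace_conj']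

theorem trace_restrict_independent_of_subspace
    {k V : Type*} [Field k] [AddCommGroup V] [Module k V]
    (φ : V →ₗ[k] V) (hφ : IsFinitePotent φ)
    (W₁ W₂ : Submodule k V) (h₁ : ∀ x ∈ W₁, φ x ∈ W₁) (h₂ : ∀ x ∈ W₂, φ x ∈ W₂)
    (hfd₁ : FiniteDimensional k W₁) (hfd₂ : FiniteDimensional k W₂)
    (m₁ m₂ : ℕ) (hm₁ : LinearMap.range (φ ^ m₁) ≤ W₁) (hm₂ : LinearMap.range (φ ^ m₂) ≤ W₂) :
    LinearMap.trace k W₁ (φ.restrict h₁) = LinearMap.trace k W₂ (φ.restrict h₂) := by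
  set W₀ := W₁ ⊓ W₂ with hW₀
  have h₀ : ∀ x ∈ W₀, φ x ∈ W₀ := fun x hx => ⟨h₁ x hx.1, h₂ x hx.2⟩
  have hr : LinearMap.range (φ ^ (m₁ + m₂)) ≤ W₀ := by
    refine le_inf ?_ ?_
    · rintro _ ⟨x, rfl⟩
      rw [pow_add, Module.End.mul_apply]
      exact hm₁ ⟨(φ ^ m₂) x, rfl⟩
    · rintro _ ⟨x, rfl⟩
      rw [add_comm, pow_add, Module.End.mul_apply]
      exact hm₂ ⟨(φ ^ m₁) x, rfl⟩
  rw [trace_restrict_eq_of_le_aux φ W₀ W₁ inf_le_left h₁ h₀ hfd₁ (m₁ + m₂) hr,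
      trace_restrict_eq_of_le_aux φ W₀ W₂ inf_le_right h₂ h₀ hfd₂ (m₁ + m₂) hr]
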